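/- For every d ≥ 5, there exists a mass distribution μ on ℝ^d (supported on the moment curve) that admits no 2^d-partition by d hyperplanes: for any d affine hyperplanes, at least one of the 2^d open orthants they determine has μ-measure zero, hence the orthants cannot all have measure μ(ℝ^d)/2^d > 0. -/

import Mathlib

open MeasureTheory
open scoped RealInnerProductSpace

noncomputable section

/-- The moment curve `{(t, t², …, t^d) : t ∈ ℝ}` in ℝ^d. -/
def momentCurve (d : ℕ) : Set (EuclideanSpace ℝ (Fin d)) :=
  {x | ∃ t : ℝ, ∀ i : Fin d, x i = t ^ ((i : ℕ) + 1)}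

def halfSpaceD {d : ℕ} (v : EuclideanSpace ℝ (Fin d)) (a : ℝ) (s : Bool) :
    Set (EuclideanSpace ℝ (Fin d)) :=
  if s then {x | a < ⟪v, x⟫} else {x | ⟪v, x⟫ < a}

def orthantD {d k : ℕ} (v : Fin k → EuclideanSpace ℝ (Fin d)) (a : Fin k → ℝ)
    (α : Fin k → Bool) : Set (EuclideanSpace ℝ (Fin d)) :=
  ⋂ i, halfSpaceD (v i) (a i) (α i)

namespace Stmt4Aux

open Polynomial

def phi (d : ℕ) : ℝ → EuclideanSpace ℝ (Fin d) := fun t => WithLp.toLp 2 (fun i => t ^ ((i:ℕ)+1))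

lemma continuous_phi (d : ℕ) : Continuous (phi d) := by
  apply (PiLp.continuous_toLp 2 (fun _ : Fin d => ℝ)).comp
  apply continuous_pi
  intro i
  exact continuous_pow _

lemma inner_phi {d : ℕ} (v : EuclideanSpace ℝ (Fin d)) (t : ℝ) :
    ⟪v, phi d t⟫ = ∑ i, v i * t ^ ((i:ℕ)+1) := by
  simp [PiLp.inner_apply, RCLike.inner_apply, phi, mul_comm]

def P {d : ℕ} (v : EuclideanSpace ℝ (Fin d)) (a : ℝ) : Polynomial ℝ :=
  (∑ j : Fin d, C (v j) * X ^ ((j:ℕ)+1)) - C a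

lemma eval_P {d : ℕ} (v : EuclideanSpace ℝ (Fin d)) (a t : ℝ) :
    (P v a).eval t = ⟪v, phi d t⟫ - a := by
  simp only [P, eval_sub, eval_finset_sum, eval_C, eval_mul, eval_pow, eval_X, inner_phi]

lemma P_ne_zero {d : ℕ} {v : EuclideanSpace ℝ (Fin d)} (hv : v ≠ 0) (a : ℝ) :
    P v a ≠ 0 := by
  obtain ⟨j, hj⟩ : ∃ j, v j ≠ 0 := by
    by_contra h
    push_neg at h
    exact hv (by ext i; exact h i)
  intro h
  have : (P v a).coeff ((j:ℕ)+1) = v j := by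
    simp only [P, coeff_sub, finset_sum_coeff, coeff_C_mul, coeff_X_pow]
    rw [Finset.sum_eq_single j]
    · simp
    · intro b _ hb
      have hbj : ¬ ((j:ℕ) = (b:ℕ)+1-1) := by
        simp [Fin.val_eq_val]
        exact fun h' => hb (h'.symm)
      simp [Fin.val_eq_val, hb]
      omega
    · simp
  rw [h] at this
  simp at this
  exact hj this.symm

lemma natDegree_P_le {d : ℕ} (v : EuclideanSpace ℝ (Fin d)) (a : ℝ) :
    (P v a).natDegree ≤ d := by
  apply le_trans (natDegree_sub_le _ _)
  simp only [natDegree_C, max_le_iff]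
  constructor
  · apply Polynomial.natDegree_sum_le_of_forall_le
    intro i _
    apply le_trans (natDegree_C_mul_le _ _)
    simp [Nat.succ_le_of_lt i.isLt]
  · omega

lemma sq_lt_two_pow : ∀ d : ℕ, 5 ≤ d → d*d+1 < 2^d := by
  intro d
  induction d with
  | zero => omega
  | succ n ih =>
    intro hd
    rcases Nat.lt_or_ge n 5 with h | h
    · have hn : n = 4 := by omega
      subst hn; norm_num
    · have h1 := ih h
      calc (n+1)*(n+1)+1 ≤ 2*(n*n+1) := by nlinarith
        _ < 2*2^n := by omega
        _ = 2^(n+1) := by ring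

lemma continuous_inner_left {d : ℕ} (v : EuclideanSpace ℝ (Fin d)) :
    Continuous fun x : EuclideanSpace ℝ (Fin d) => ⟪v, x⟫ :=
  continuous_const.inner continuous_id

lemma measurableSet_halfSpace {d : ℕ} (v : EuclideanSpace ℝ (Fin d)) (a : ℝ) (s : Bool) :
    MeasurableSet (halfSpaceD v a s) := by
  cases s <;> simp only [halfSpaceD, Bool.false_eq_true, if_false, if_true]
  · exact (isOpen_lt (continuous_inner_left v) continuous_const).measurableSet
  · exact (isOpen_lt continuous_const (continuous_inner_left v)).measurableSet

end Stmt4Aux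

open Stmt4Aux

theorem stmt4 (d : ℕ) (hd : 5 ≤ d) :
    ∃ μ : Measure (EuclideanSpace ℝ (Fin d)), IsFiniteMeasure μ ∧ μ Set.univ ≠ 0 ∧
      (∀ v : EuclideanSpace ℝ (Fin d), v ≠ 0 → ∀ a : ℝ, μ {x | ⟪v, x⟫ = a} = 0) ∧
      μ (momentCurve d)ᶜ = 0 ∧
      ∀ (v : Fin d → EuclideanSpace ℝ (Fin d)) (a : Fin d → ℝ), (∀ i, v i ≠ 0) →
        ∃ α : Fin d → Bool, μ (orthantD v a α) = 0 := by
  classical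
  have hmphi : Measurable (phi d) := (continuous_phi d).measurable
  set ν : Measure ℝ := volume.restrict (Set.Icc (0:ℝ) 1) with hν
  refine ⟨Measure.map (phi d) ν, ?_, ?_, ?_, ?_, ?_⟩
  · constructor
    rw [Measure.map_apply hmphi MeasurableSet.univ]
    simp [hν, Real.volume_Icc]
  · rw [Measure.map_apply hmphi MeasurableSet.univ]
    simp [hν, Real.volume_Icc]
  · intro v hv a
    have hS : MeasurableSet {x : EuclideanSpace ℝ (Fin d) | ⟪v, x⟫ = a} :=
      (isClosed_eq (continuous_inner_left v) continuous_const).measurableSet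
    rw [Measure.map_apply hmphi hS]
    have hsub : phi d ⁻¹' {x | ⟪v, x⟫ = a} ⊆ {t | (P v a).IsRoot t} := by
      intro t ht
      simp only [Set.mem_preimage, Set.mem_setOf_eq] at ht ⊢
      rw [Polynomial.IsRoot, eval_P, ht, sub_self]
    have hfin : {t | (P v a).IsRoot t}.Finite := Polynomial.finite_setOf_isRoot (P_ne_zero hv a)
    exact measure_mono_null hsub (hfin.measure_zero ν)
  · have hd0 : 0 < d := by omega
    have hcl : IsClosed (momentCurve d) := by
      have heq : momentCurve d =
          ⋂ i : Fin d, {x : EuclideanSpace ℝ (Fin d) | x i = (x ⟨0, hd0⟩) ^ ((i:ℕ)+1)} := by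
        ext x
        simp only [momentCurve, Set.mem_setOf_eq, Set.mem_iInter]
        constructor
        · rintro ⟨t, ht⟩ i
          have h0 : x ⟨0, hd0⟩ = t := by simpa using ht ⟨0, hd0⟩
          rw [h0]
          exact ht i
        · intro hx
          exact ⟨x ⟨0, hd0⟩, hx⟩
      rw [heq]
      exact isClosed_iInter fun i =>
        isClosed_eq (EuclideanSpace.proj i).continuous ((EuclideanSpace.proj (⟨0, hd0⟩ : Fin d)).continuous.pow _)
    rw [Measure.map_apply hmphi hcl.measurableSet.compl]
    have hpre : phi d ⁻¹' (momentCurve d)ᶜ = ∅ :=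
      Set.eq_empty_iff_forall_notMem.2 fun t ht => ht ⟨t, fun i => rfl⟩
    rw [hpre]
    simp
  · intro v a hv
    have hQ0 : ∀ i, P (v i) (a i) ≠ 0 := fun i => P_ne_zero (hv i) (a i)
    set R : Finset ℝ :=
      insert 0 (Finset.univ.biUnion fun i : Fin d => (P (v i) (a i)).roots.toFinset) with hR
    have hRcard : R.card ≤ d*d+1 := by
      apply le_trans (Finset.card_insert_le _ _)
      have h1 : (Finset.univ.biUnion fun i : Fin d => (P (v i) (a i)).roots.toFinset).card ≤ d*d := by
        apply le_trans Finset.card_biUnion_le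
        have h2 : ∀ i : Fin d, (P (v i) (a i)).roots.toFinset.card ≤ d := fun i =>
          le_trans (Multiset.toFinset_card_le _)
            (le_trans (Polynomial.card_roots' _) (natDegree_P_le (v i) (a i)))
        calc ∑ i : Fin d, (P (v i) (a i)).roots.toFinset.card ≤ ∑ _i : Fin d, d :=
              Finset.sum_le_sum fun i _ => h2 i
          _ = d*d := by simp [Finset.sum_const, mul_comm]
      omega
    have hrootR : ∀ (i : Fin d) (t : ℝ), (P (v i) (a i)).IsRoot t → t ∈ R := by
      intro i t ht
      refine Finset.mem_insert_of_mem (Finset.mem_biUnion.2 ⟨i, Finset.mem_univ i, ?_⟩)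
      rw [Multiset.mem_toFinset, Polynomial.mem_roots (hQ0 i)]
      exact ht
    have hnotroot : ∀ t : ℝ, t ∉ (R : Set ℝ) → ∀ i, ⟪v i, phi d t⟫ ≠ a i := by
      intro t ht i heq
      refine ht (hrootR i t ?_)
      rw [Polynomial.IsRoot, eval_P, heq, sub_self]
    set σ : ℝ → Fin d → Bool := fun t i => decide (a i < ⟪v i, phi d t⟫) with hσ
    have hRne : ∀ t : ℝ, (insert (0:ℝ) (R.filter (· ≤ t))).Nonempty :=
      fun t => Finset.insert_nonempty _ _
    set g : ℝ → ℝ := fun t => (insert (0:ℝ) (R.filter (· ≤ t))).max' (hRne t) with hg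
    have hgmem : ∀ t : ℝ, 0 ≤ t → g t ∈ R ∧ g t ≤ t := by
      intro t ht
      have hm := (insert (0:ℝ) (R.filter (· ≤ t))).max'_mem (hRne t)
      rw [Finset.mem_insert] at hm
      rcases hm with h0 | hmem
      · exact ⟨by rw [hg]; simp only [h0]; exact Finset.mem_insert_self 0 _,
          by rw [hg]; simp only [h0]; exact ht⟩
      · rw [Finset.mem_filter] at hmem
        exact ⟨hmem.1, hmem.2⟩
    have hgle : ∀ t r : ℝ, r ∈ R → r ≤ t → r ≤ g t := by
      intro t r hr hrt
      rw [hg]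
      exact Finset.le_max' (insert (0:ℝ) (R.filter (· ≤ t))) r
        (Finset.mem_insert_of_mem (Finset.mem_filter.2 ⟨hr, hrt⟩))
    have keyB : ∀ s s' : ℝ, s ∈ Set.Icc (0:ℝ) 1 → s' ∈ Set.Icc (0:ℝ) 1 →
        s ∉ (R:Set ℝ) → s' ∉ (R:Set ℝ) → g s = g s' → σ s = σ s' := by
      have main : ∀ s s' : ℝ, s ≤ s' → 0 ≤ s → s ∉ (R:Set ℝ) → s' ∉ (R:Set ℝ) →
          g s = g s' → σ s = σ s' := by
        intro s s' hle hs0 hsR hs'R hgg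
        funext i
        by_contra hne
        have h1 : ⟪v i, phi d s⟫ ≠ a i := hnotroot s hsR i
        have h2 : ⟪v i, phi d s'⟫ ≠ a i := hnotroot s' hs'R i
        have hne' : ¬ ((a i < ⟪v i, phi d s⟫) ↔ (a i < ⟪v i, phi d s'⟫)) := by
          simpa [hσ, decide_eq_decide] using hne
        have hcases : (⟪v i, phi d s⟫ < a i ∧ a i < ⟪v i, phi d s'⟫) ∨
            (⟪v i, phi d s'⟫ < a i ∧ a i < ⟪v i, phi d s⟫) := by
          rcases lt_or_gt_of_ne h1 with hlt | hgt <;>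
            rcases lt_or_gt_of_ne h2 with hlt' | hgt'
          · exact absurd (by constructor <;> intro h <;> linarith) hne'
          · exact Or.inl ⟨hlt, hgt'⟩
          · exact Or.inr ⟨hlt', hgt⟩
          · exact absurd (by constructor <;> intro h <;> linarith) hne'
        have hcont := (P (v i) (a i)).continuous_aeval.continuousOn (s := Set.Icc s s')
        obtain ⟨r, hrmem, hr0⟩ : ∃ r ∈ Set.Icc s s', (P (v i) (a i)).eval r = 0 := by
          rcases hcases with ⟨ha1, ha2⟩ | ⟨ha1, ha2⟩
          · have him := intermediate_value_Icc hle
              ((P (v i) (a i)).continuous.continuousOn (s := Set.Icc s s'))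
            have h0m : (0:ℝ) ∈ Set.Icc ((P (v i) (a i)).eval s) ((P (v i) (a i)).eval s') := by
              rw [eval_P, eval_P]
              constructor <;> [linarith; linarith]
            obtain ⟨r, hr, hre⟩ := him h0m
            exact ⟨r, hr, hre⟩
          · have him := intermediate_value_Icc' hle
              ((P (v i) (a i)).continuous.continuousOn (s := Set.Icc s s'))
            have h0m : (0:ℝ) ∈ Set.Icc ((P (v i) (a i)).eval s') ((P (v i) (a i)).eval s) := by
              rw [eval_P, eval_P]
              constructor <;> [linarith; linarith]
            obtain ⟨r, hr, hre⟩ := him h0m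
            exact ⟨r, hr, hre⟩
        have hrR : r ∈ R := hrootR i r hr0
        have hrs : s < r := by
          rcases lt_or_eq_of_le hrmem.1 with h | h
          · exact h
          · exfalso
            rw [← h] at hr0
            rw [eval_P] at hr0
            exact h1 (by linarith)
        have hrg : r ≤ g s' := hgle s' r hrR hrmem.2
        have hgs : g s ≤ s := (hgmem s hs0).2
        rw [← hgg] at hrg
        linarith
      intro s s' hs hs' hsR hs'R hgg
      rcases le_total s s' with h | h
      · exact main s s' h hs.1 hsR hs'R hgg
      · exact (main s' s h hs'.1 hs'R hsR hgg.symm).symm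
    have keyA : ∀ (t : ℝ) (α : Fin d → Bool), phi d t ∈ orthantD v a α → σ t = α := by
      intro t α ht
      funext i
      have hi : phi d t ∈ halfSpaceD (v i) (a i) (α i) := Set.mem_iInter.1 ht i
      cases hαi : α i
      · rw [hαi] at hi
        simp only [halfSpaceD, Bool.false_eq_true, if_false, Set.mem_setOf_eq] at hi
        simp only [hσ, decide_eq_false_iff_not, not_lt]
        exact le_of_lt hi
      · rw [hαi] at hi
        simp only [halfSpaceD, if_true, Set.mem_setOf_eq] at hi
        simp only [hσ, decide_eq_true_eq]
        exact hi
    by_contra hcon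
    push_neg at hcon
    have horth_meas : ∀ α : Fin d → Bool, MeasurableSet (orthantD v a α) := fun α =>
      MeasurableSet.iInter fun i => measurableSet_halfSpace (v i) (a i) (α i)
    have hchoice : ∀ α : Fin d → Bool,
        ∃ t : ℝ, t ∈ Set.Icc (0:ℝ) 1 ∧ t ∉ (R:Set ℝ) ∧ phi d t ∈ orthantD v a α := by
      intro α
      have h1 : Measure.map (phi d) ν (orthantD v a α) ≠ 0 := hcon α
      rw [Measure.map_apply hmphi (horth_meas α)] at h1
      have hRnull : ν (R:Set ℝ) = 0 := R.finite_toSet.measure_zero ν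
      have h2 : ν (phi d ⁻¹' orthantD v a α \ (R:Set ℝ)) ≠ 0 := by
        rw [measure_diff_null hRnull]
        exact h1
      have hmS : MeasurableSet (phi d ⁻¹' orthantD v a α \ (R:Set ℝ)) :=
        (hmphi (horth_meas α)).diff R.finite_toSet.measurableSet
      rw [hν, Measure.restrict_apply hmS] at h2
      have hne : ((phi d ⁻¹' orthantD v a α \ (R:Set ℝ)) ∩ Set.Icc 0 1).Nonempty := by
        rw [Set.nonempty_iff_ne_empty]
        intro h0
        rw [h0] at h2
        simp at h2
      obtain ⟨t, ⟨htpre, htR⟩, htIcc⟩ := hne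
      exact ⟨t, htIcc, htR, htpre⟩
    choose tα htα1 htα2 htα3 using hchoice
    have hcard : (Finset.univ : Finset (Fin d → Bool)).card ≤ R.card := by
      apply Finset.card_le_card_of_injOn (f := fun α => g (tα α)) (s := Finset.univ) (t := R)
      · intro α _
        exact (hgmem (tα α) (htα1 α).1).1
      · intro α _ β _ hgg
        have hσeq := keyB (tα α) (tα β) (htα1 α) (htα1 β) (htα2 α) (htα2 β) hgg
        rw [keyA _ _ (htα3 α), keyA _ _ (htα3 β)] at hσeq
        exact hσeq
    have h2d : (Finset.univ : Finset (Fin d → Bool)).card = 2^d := by simp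
    have := sq_lt_two_pow d hd
    omega
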